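/- The map τ(x,y) = (81(2x−567)/(x−162), −19683·y/(x−162)²) sends points of the elliptic curve y² = x³ − 98415x + 11691702 to points of the same curve; i.e., if y² = x³ − 98415x + 11691702 and x ≠ 162, then q² = p³ − 98415p + 11691702 where p = 81(2x−567)/(x−162) and q = −19683y/(x−162)². -/

import Mathlib

/-- τ maps points of y² = x³ - 98415x + 11691702 to points of the same curve. -/
theorem stmt10 (x y : ℚ) (h : y ^ 2 = x ^ 3 - 98415 * x + 11691702)
    (hx : x ≠ 162) :
    (-19683 * y / (x - 162) ^ 2) ^ 2 =
      (81 * (2 * x - 567) / (x - 162)) ^ 3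
        - 98415 * (81 * (2 * x - 567) / (x - 162)) + 11691702 := by
  have hx' : x - 162 ≠ 0 := sub_ne_zero.mpr hx
  field_simp
  linear_combination (387420489 : ℚ) * h
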